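/- For every α ∈ [0,1), the maximum over p ∈ [0,1/2] of α(log 3 − p) + (1−α)h(p) equals α(log 3 − 1) + (1−α)·log(1 + 2^{α/(1−α)}), and this maximum is attained at p* = 1/(1 + 2^{α/(1−α)}). -/

import Mathlib

open Real

/-- The binary entropy function (base-2 logarithm); `Real.logb 2 0 = 0`, so the
convention `0 · log 0 = 0` holds automatically. -/
noncomputable def binEnt (p : ℝ) : ℝ := -(p * logb 2 p) - (1 - p) * logb 2 (1 - p)

lemma log_key {x q : ℝ} (hx : 0 ≤ x) (hq : 0 < q) :
    x * (Real.log q - Real.log x) ≤ q - x := by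
  rcases eq_or_lt_of_le hx with h | h
  · simp [← h]; positivity
  · have hdiv : 0 < q / x := div_pos hq h
    have := Real.log_le_sub_one_of_pos hdiv
    rw [Real.log_div hq.ne' h.ne'] at this
    have := mul_le_mul_of_nonneg_left this h.le
    calc x * (Real.log q - Real.log x) ≤ x * (q / x - 1) := this
      _ = q - x := by field_simp

lemma gibbs {p q : ℝ} (hp0 : 0 ≤ p) (hp1 : p ≤ 1) (hq0 : 0 < q) (hq1 : q < 1) :
    binEnt p ≤ -(p * logb 2 q) - (1 - p) * logb 2 (1 - q) := by
  have hlog2 : 0 < Real.log 2 := Real.log_pos (by norm_num)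
  have h1 := log_key hp0 hq0
  have h2 := log_key (x := 1 - p) (q := 1 - q) (by linarith) (by linarith)
  have h : -(p * Real.log p) - (1 - p) * Real.log (1 - p) ≤
      -(p * Real.log q) - (1 - p) * Real.log (1 - q) := by nlinarith
  have h' := mul_le_mul_of_nonneg_right h (inv_pos.mpr hlog2).le
  unfold binEnt
  simp only [Real.logb, div_eq_mul_inv]
  nlinarith [h']

/-- For `α ∈ [0,1)`, the maximum over `p ∈ [0,1/2]` of
`α(log 3 − p) + (1−α)h(p)` equals `α(log 3 − 1) + (1−α)·log(1 + 2^{α/(1−α)})`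
and is attained at `p* = 1/(1 + 2^{α/(1−α)})` (which lies in `[0,1/2]`). -/
theorem contraction_max_value (α : ℝ) (hα : α ∈ Set.Ico (0 : ℝ) 1) :
    (1 / (1 + (2 : ℝ) ^ (α / (1 - α))) ∈ Set.Icc (0 : ℝ) (1 / 2)) ∧
    α * (logb 2 3 - 1 / (1 + (2 : ℝ) ^ (α / (1 - α)))) +
        (1 - α) * binEnt (1 / (1 + (2 : ℝ) ^ (α / (1 - α)))) =
      α * (logb 2 3 - 1) + (1 - α) * logb 2 (1 + (2 : ℝ) ^ (α / (1 - α))) ∧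
    ∀ p ∈ Set.Icc (0 : ℝ) (1 / 2),
      α * (logb 2 3 - p) + (1 - α) * binEnt p ≤
        α * (logb 2 3 - 1) + (1 - α) * logb 2 (1 + (2 : ℝ) ^ (α / (1 - α))) := by
  obtain ⟨hα0, hα1⟩ := hα
  have h1α : (0:ℝ) < 1 - α := by linarith
  set c : ℝ := α / (1 - α) with hc_def
  have hc : 0 ≤ c := div_nonneg hα0 h1α.le
  have hαc : (1 - α) * c = α := by rw [hc_def]; field_simp [h1α.ne']
  set t : ℝ := (2:ℝ) ^ c with ht_def
  have ht0 : 0 < t := Real.rpow_pos_of_pos (by norm_num) c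
  have ht1 : 1 ≤ t := by
    have := Real.rpow_le_rpow_of_exponent_le (by norm_num : (1:ℝ) ≤ 2) hc
    simpa using this
  have h1t : (0:ℝ) < 1 + t := by linarith
  have hlogt : logb 2 t = c := Real.logb_rpow (by norm_num) (by norm_num)
  -- p*
  have hp0 : 0 < 1 / (1 + t) := by positivity
  have hp1 : 1 / (1 + t) < 1 := by
    rw [div_lt_one h1t]; linarith
  have hphalf : 1 / (1 + t) ≤ 1 / 2 := by
    rw [div_le_div_iff₀ h1t two_pos]; linarith
  have h1p : 1 - 1 / (1 + t) = t / (1 + t) := by field_simp; ring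
  set L : ℝ := logb 2 (1 + t) with hL_def
  have hlogp : logb 2 (1 / (1 + t)) = -L := by
    rw [one_div, Real.logb_inv]
  have hlog1p : logb 2 (1 - 1 / (1 + t)) = c - L := by
    rw [h1p, Real.logb_div ht0.ne' h1t.ne', hlogt]
  -- value of binEnt at p*
  have hbe : binEnt (1 / (1 + t)) = L - (1 - 1 / (1 + t)) * c := by
    unfold binEnt
    rw [hlogp, hlog1p, h1p]
    field_simp
    ring
  refine ⟨⟨hp0.le, hphalf⟩, ?_, ?_⟩
  · rw [hbe]
    have hps : 1 / (1 + t) + (1 - 1 / (1 + t)) = 1 := by ring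
    nlinarith [hαc]
  · intro p hp
    obtain ⟨hp0', hp1'⟩ := hp
    have hg := gibbs hp0' (by linarith) hp0 hp1
    have hg' := mul_le_mul_of_nonneg_left hg h1α.le
    have hrhs : (1 - α) * (-(p * logb 2 (1 / (1 + t))) -
        (1 - p) * logb 2 (1 - 1 / (1 + t))) =
        (1 - α) * (p * L + (1 - p) * (L - c)) := by
      rw [hlogp, hlog1p]; ring
    rw [hrhs] at hg'
    nlinarith [hg', hαc]
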